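/- If two rooted trees (T,r) and (T',r') satisfy the level-label condition, then they are isomorphic. -/

import Mathlib

attribute [local instance] Classical.propDecidable

namespace AHU

variable {V : Type*}

/-- The height of the rooted tree `(G, r)`: maximum distance from the root. -/
noncomputable def height (G : SimpleGraph V) [Fintype V] (r : V) : ℕ :=
  Finset.univ.sup fun v => G.dist r v

/-- The level of a vertex: height minus distance from the root. -/
noncomputable def lvl (G : SimpleGraph V) [Fintype V] (r : V) (v : V) : ℕ :=
  height G r - G.dist r v

/-- `T_i`: the set of vertices at level `i`. -/
noncomputable def levelSet (G : SimpleGraph V) [Fintype V] (r : V) (i : ℕ) : Finset V :=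
  Finset.univ.filter fun v => lvl G r v = i

/-- A vertex is a leaf if it has degree at most one. -/
def IsLeaf (G : SimpleGraph V) (v : V) : Prop :=
  {u | G.Adj v u}.ncard ≤ 1

/-- The parent of `v ≠ r`: the unique neighbour of `v` lying closer to the root
(on the unique path from `r` to `v`).  For `v = r` we return `v` itself. -/
noncomputable def parent (G : SimpleGraph V) (r v : V) : V :=
  if h : ∃ p, G.Adj p v ∧ G.dist r p + 1 = G.dist r v then h.choose else v

/-- The set of children of `u`. -/
noncomputable def children (G : SimpleGraph V) [Fintype V] (r u : V) : Finset V :=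
  Finset.univ.filter fun v => v ≠ r ∧ parent G r v = u

/-- The label-compression of a finite set `S` of tuples: the unique order isomorphism
from `(S, ≤lex)` onto `{0, …, |S| - 1}`, i.e. `s ↦ #{t ∈ S | t <lex s}`. -/
noncomputable def compress (S : Finset (List ℕ)) (s : List ℕ) : ℕ :=
  (S.filter fun t => List.Lex (· < ·) t s).card

/-- Auxiliary, level-indexed version of the compressed descendant labeling:
`labelAt G r i v` is the label of a vertex `v` of level `i`. -/
noncomputable def labelAt (G : SimpleGraph V) [Fintype V] (r : V) : ℕ → V → List ℕ
  | 0, _ => []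
  | (i + 1), v =>
      if IsLeaf G v then []
      else
        Multiset.sort
          ((children G r v).val.map fun u =>
            compress ((levelSet G r i).image (labelAt G r i)) (labelAt G r i u)) (· ≤ ·)

/-- The compressed descendant labeling `cdl : V(T) → ℕ*`. -/
noncomputable def cdl (G : SimpleGraph V) [Fintype V] (r : V) (v : V) : List ℕ :=
  labelAt G r (lvl G r v) v

/-- `𝓛(W)`: the multiset of compressed descendant labels of the vertices of `W`. -/
noncomputable def labels (G : SimpleGraph V) [Fintype V] (r : V) (W : Finset V) :
    Multiset (List ℕ) :=
  W.val.map (cdl G r)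

/-- The level-label condition: the multisets of labels agree on every level
`i = 0, 1, …, max(height T, height T')`. -/
noncomputable def LevelLabelCondition {V' : Type*} (G : SimpleGraph V) [Fintype V] (r : V)
    (G' : SimpleGraph V') [Fintype V'] (r' : V') : Prop :=
  ∀ i ≤ max (height G r) (height G' r' ),
    labels G r (levelSet G r i) = labels G' r' (levelSet G' r' i)


section TreeBasics

variable {G : SimpleGraph V} {r : V}

/-- Any path from `r` to `v` in a tree has length `dist r v`. -/
lemma path_length (hT : G.IsTree) {v : V} (p : G.Walk r v) (hp : p.IsPath) :
    p.length = G.dist r v := by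
  obtain ⟨q, hq, hlen⟩ := hT.isConnected.exists_path_of_dist r v
  rw [(hT.existsUnique_path r v).unique hp hq, hlen]

lemma exists_parent (hT : G.IsTree) {v : V} (hv : v ≠ r) :
    ∃ p, G.Adj p v ∧ G.dist r p + 1 = G.dist r v := by
  have hd : G.dist r v ≠ 0 := by
    rw [Ne, hT.isConnected.dist_eq_zero_iff]
    exact fun h => hv h.symm
  obtain ⟨p, hlen⟩ := SimpleGraph.exists_walk_of_dist_ne_zero hd
  have hnil : ¬ p.Nil := by
    intro h
    rw [SimpleGraph.Walk.nil_iff_length_eq.mp h] at hlen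
    exact hd hlen.symm
  obtain ⟨x, hadj0, q0, rfl⟩ := SimpleGraph.Walk.not_nil_iff.mp hnil
  obtain ⟨u, q, hadj, heq⟩ := SimpleGraph.Walk.exists_cons_eq_concat hadj0 q0
  rw [heq] at hlen
  refine ⟨u, hadj, ?_⟩
  rw [SimpleGraph.Walk.length_concat] at hlen
  have h1 : G.dist r u ≤ q.length := SimpleGraph.dist_le q
  have h2 : G.dist r v ≤ G.dist r u + 1 := by
    calc G.dist r v ≤ G.dist r u + G.dist u v := hT.isConnected.dist_triangle
    _ ≤ G.dist r u + 1 := by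
        have h3 := SimpleGraph.dist_le (SimpleGraph.Walk.cons hadj SimpleGraph.Walk.nil)
        simp only [SimpleGraph.Walk.length_cons, SimpleGraph.Walk.length_nil] at h3
        omega
  omega

lemma parent_spec (hT : G.IsTree) {v : V} (hv : v ≠ r) :
    G.Adj (parent G r v) v ∧ G.dist r (parent G r v) + 1 = G.dist r v := by
  have h := exists_parent hT hv
  rw [parent, dif_pos h]
  exact h.choose_spec

lemma parent_eq (hT : G.IsTree) {v p : V} (hadj : G.Adj p v)
    (hd : G.dist r p + 1 = G.dist r v) : parent G r v = p := by
  have hv : v ≠ r := by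
    intro h; subst h
    rw [SimpleGraph.dist_self] at hd; omega
  obtain ⟨h1, h2⟩ := parent_spec hT hv
  set p' := parent G r v
  -- build two paths from r to v
  obtain ⟨q1, hq1, hl1⟩ := hT.isConnected.exists_path_of_dist r p'
  obtain ⟨q2, hq2, hl2⟩ := hT.isConnected.exists_path_of_dist r p
  have hw1 : (q1.concat h1).IsPath := by
    apply SimpleGraph.Walk.isPath_of_length_eq_dist
    rw [SimpleGraph.Walk.length_concat, hl1, h2]
  have hw2 : (q2.concat hadj).IsPath := by
    apply SimpleGraph.Walk.isPath_of_length_eq_dist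
    rw [SimpleGraph.Walk.length_concat, hl2, hd]
  have := (hT.existsUnique_path r v).unique hw1 hw2
  exact (SimpleGraph.Walk.concat_inj this).1

lemma adj_dist (hT : G.IsTree) {u v : V} (h : G.Adj u v) :
    G.dist r u + 1 = G.dist r v ∨ G.dist r v + 1 = G.dist r u := by
  obtain ⟨p, hp, hl⟩ := hT.isConnected.exists_path_of_dist r v
  by_cases hu : u ∈ p.support
  · left
    have htake : (p.takeUntil u hu).IsPath := hp.takeUntil hu
    have hdrop : (p.dropUntil u hu).IsPath := hp.dropUntil hu
    have hsplit := p.take_spec hu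
    have hlen : (p.takeUntil u hu).length + (p.dropUntil u hu).length = p.length := by
      rw [← SimpleGraph.Walk.length_append, hsplit]
    have h1 : (p.takeUntil u hu).length = G.dist r u := path_length hT _ htake
    -- the drop part is a path from u to v, as is the single edge
    have hedge : (SimpleGraph.Walk.cons h SimpleGraph.Walk.nil : G.Walk u v).IsPath := by
      simp [SimpleGraph.Walk.cons_isPath_iff, h.ne]
    have := (hT.existsUnique_path u v).unique hdrop hedge
    have h2 : (p.dropUntil u hu).length = 1 := by rw [this]; simp
    omega
  · right
    have hw : (p.concat h.symm).IsPath := by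
      rw [← SimpleGraph.Walk.isPath_reverse_iff, SimpleGraph.Walk.reverse_concat]
      rw [SimpleGraph.Walk.cons_isPath_iff]
      refine ⟨hp.reverse, ?_⟩
      rw [SimpleGraph.Walk.support_reverse, List.mem_reverse]
      exact hu
    have := path_length hT _ hw
    rw [SimpleGraph.Walk.length_concat, hl] at this
    omega

lemma adj_iff (hT : G.IsTree) {u v : V} :
    G.Adj u v ↔ (v ≠ r ∧ parent G r v = u) ∨ (u ≠ r ∧ parent G r u = v) := by
  constructor
  · intro h
    rcases adj_dist (r := r) hT h with hd | hd
    · left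
      have hv : v ≠ r := by
        intro hv; subst hv; rw [SimpleGraph.dist_self] at hd; omega
      exact ⟨hv, parent_eq hT h hd⟩
    · right
      have hu : u ≠ r := by
        intro hu; subst hu; rw [SimpleGraph.dist_self] at hd; omega
      exact ⟨hu, parent_eq hT h.symm hd⟩
  · rintro (⟨hv, rfl⟩ | ⟨hu, rfl⟩)
    · exact (parent_spec hT hv).1
    · exact (parent_spec hT hu).1.symm

variable [Fintype V]

lemma dist_le_height (G : SimpleGraph V) (r v : V) : G.dist r v ≤ height G r :=
  Finset.le_sup (Finset.mem_univ v)

lemma lvl_le_height (G : SimpleGraph V) (r v : V) : lvl G r v ≤ height G r :=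
  Nat.sub_le _ _

lemma lvl_add_dist (G : SimpleGraph V) (r v : V) :
    lvl G r v + G.dist r v = height G r := by
  have := dist_le_height G r v
  rw [lvl]; omega

lemma lvl_root (G : SimpleGraph V) (r : V) : lvl G r r = height G r := by
  rw [lvl, SimpleGraph.dist_self, Nat.sub_zero]

lemma lvl_eq_height_iff (hT : G.IsTree) {v : V} :
    lvl G r v = height G r ↔ v = r := by
  constructor
  · intro h
    have h2 := lvl_add_dist G r v
    have : G.dist r v = 0 := by omega
    exact (hT.isConnected.dist_eq_zero_iff.mp this).symm
  · intro h; rw [h]; exact lvl_root G r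

lemma lvl_lt_height (hT : G.IsTree) {v : V} (hv : v ≠ r) :
    lvl G r v < height G r := by
  have h1 := lvl_add_dist G r v
  have h2 : G.dist r v ≠ 0 := by
    rw [Ne, hT.isConnected.dist_eq_zero_iff]
    exact fun h => hv h.symm
  omega

lemma lvl_parent (hT : G.IsTree) {v : V} (hv : v ≠ r) :
    lvl G r (parent G r v) = lvl G r v + 1 := by
  have h1 := (parent_spec (r := r) hT hv).2
  have h2 := lvl_add_dist G r v
  have h3 := lvl_add_dist G r (parent G r v)
  omega

lemma mem_children {u v : V} : u ∈ children G r v ↔ u ≠ r ∧ parent G r u = v := by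
  simp [children]

lemma lvl_of_mem_children (hT : G.IsTree) {u v : V} (h : u ∈ children G r v) :
    lvl G r u + 1 = lvl G r v := by
  obtain ⟨h1, h2⟩ := mem_children.mp h
  rw [← h2, lvl_parent hT h1]

lemma mem_levelSet {v : V} {i : ℕ} : v ∈ levelSet G r i ↔ lvl G r v = i := by
  simp [levelSet]

end TreeBasics

section Leaves

variable [Fintype V] {G : SimpleGraph V} {r : V}

lemma leaf_no_children (hT : G.IsTree) {v : V} (hv : v ≠ r) (hleaf : IsLeaf G v) :
    children G r v = ∅ := by
  by_contra h
  obtain ⟨w, hw⟩ := Finset.nonempty_of_ne_empty h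
  obtain ⟨hw1, hw2⟩ := mem_children.mp hw
  have hadj : G.Adj v w := by
    rw [← hw2]; exact (parent_spec hT hw1).1
  have hadjp : G.Adj v (parent G r v) := ((parent_spec hT hv).1).symm
  have hne : w ≠ parent G r v := by
    intro h
    have e1 : lvl G r w + 1 = lvl G r v := lvl_of_mem_children hT hw
    have e2 : lvl G r (parent G r v) = lvl G r v + 1 := lvl_parent hT hv
    rw [h, e2] at e1
    omega
  have : 1 < {u | G.Adj v u}.ncard := by
    rw [Set.one_lt_ncard (Set.toFinite _)]
    exact ⟨w, hadj, parent G r v, hadjp, hne⟩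
  exact absurd hleaf (by rw [IsLeaf]; omega)

lemma nonleaf_children_nonempty (hT : G.IsTree) {v : V} (hv : v ≠ r) (hleaf : ¬ IsLeaf G v) :
    (children G r v).Nonempty := by
  rw [IsLeaf, not_le] at hleaf
  rw [Set.one_lt_ncard (Set.toFinite _)] at hleaf
  obtain ⟨a, ha, b, hb, hab⟩ := hleaf
  have key : ∀ w, G.Adj v w → w ≠ parent G r v → w ∈ children G r v := by
    intro w hadj hne
    rcases (adj_iff (r := r) hT).mp hadj with ⟨h1, h2⟩ | ⟨h1, h2⟩
    · exact mem_children.mpr ⟨h1, h2⟩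
    · exact absurd h2.symm hne
  by_cases hap : a = parent G r v
  · exact ⟨b, key b hb (fun h => hab (by rw [hap, h]))⟩
  · exact ⟨a, key a ha hap⟩

lemma root_nonleaf_children_nonempty (hT : G.IsTree) (hleaf : ¬ IsLeaf G r) :
    (children G r r).Nonempty := by
  rw [IsLeaf, not_le] at hleaf
  rw [Set.one_lt_ncard (Set.toFinite _)] at hleaf
  obtain ⟨a, ha, b, hb, hab⟩ := hleaf
  rcases (adj_iff (r := r) hT).mp (ha : G.Adj r a) with ⟨h1, h2⟩ | ⟨h1, h2⟩
  · exact ⟨a, mem_children.mpr ⟨h1, h2⟩⟩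
  · exact absurd h1 (by simp)

end Leaves

section MultisetHelpers

lemma multiset_map_injOn {α β : Type*} {f : α → β} :
    ∀ (s t : Multiset α), (∀ x ∈ s, ∀ y ∈ t, f x = f y → x = y) →
      s.map f = t.map f → s = t := by
  intro s
  induction s using Multiset.induction with
  | empty =>
    intro t _ h
    rw [Multiset.map_zero] at h
    have := congrArg Multiset.card h
    simp at this
    exact (Multiset.card_eq_zero.mp this.symm).symm
  | cons a s ih =>
    intro t hinj h
    have ha : f a ∈ t.map f := by
      rw [← h]; simp
    obtain ⟨b, hb, hfb⟩ := Multiset.mem_map.mp ha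
    have hba : b = a := (hinj a (by simp) b hb hfb.symm).symm
    subst hba
    have ht : t = b ::ₘ t.erase b := (Multiset.cons_erase hb).symm
    rw [ht, Multiset.map_cons, Multiset.map_cons] at h
    have h' : s.map f = (t.erase b).map f := by
      exact (Multiset.cons_inj_right _).mp h
    rw [ht]
    congr 1
    exact ih (t.erase b) (fun x hx y hy => hinj x (by simp [hx]) y (Multiset.mem_of_mem_erase hy)) h'

/-- From an equality of mapped multisets over two finsets, extract a matching. -/
lemma exists_matching {α β L : Type*} [Nonempty α] [Nonempty β]
    (s : Finset α) (t : Finset β) (f : α → L) (g : β → L)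
    (h : s.val.map f = t.val.map g) :
    ∃ (σ : α → β) (τ : β → α),
      (∀ a ∈ s, σ a ∈ t ∧ g (σ a) = f a ∧ τ (σ a) = a) ∧
      (∀ b ∈ t, τ b ∈ s ∧ σ (τ b) = b) := by
  classical
  suffices H : ∀ (n : ℕ) (s : Finset α) (t : Finset β),
      s.card = n → s.val.map f = t.val.map g →
      ∃ (σ : α → β) (τ : β → α),
        (∀ a ∈ s, σ a ∈ t ∧ g (σ a) = f a ∧ τ (σ a) = a) ∧
        (∀ b ∈ t, τ b ∈ s ∧ σ (τ b) = b) by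
    exact H s.card s t rfl h
  intro n
  induction n using Nat.strong_induction_on with
  | _ n ihn =>
  intro s t hn h
  rcases s.eq_empty_or_nonempty with rfl | ⟨a, ha⟩
  · have ht0 : t = ∅ := by
      have h2 := congrArg Multiset.card h
      simp at h2
      exact Finset.card_eq_zero.mp h2.symm
    subst ht0
    exact ⟨fun _ => Classical.arbitrary β, fun _ => Classical.arbitrary α, by simp, by simp⟩
  · have hfa : f a ∈ t.val.map g := by
      rw [← h]
      exact Multiset.mem_map_of_mem f ha
    obtain ⟨b, hb, hgb⟩ := Multiset.mem_map.mp hfa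
    have hb' : b ∈ t := hb
    have herase : (s.erase a).val.map f = (t.erase b).val.map g := by
      rw [Finset.erase_val, Finset.erase_val]
      have hs : s.val = a ::ₘ (s.val.erase a) := (Multiset.cons_erase ha).symm
      have ht : t.val = b ::ₘ (t.val.erase b) := (Multiset.cons_erase hb).symm
      rw [hs, Multiset.map_cons, ht, Multiset.map_cons, hgb] at h
      exact (Multiset.cons_inj_right _).mp h
    have hcard : (s.erase a).card < s.card := Finset.card_erase_lt_of_mem ha
    obtain ⟨σ₀, τ₀, h1, h2⟩ := ihn ((s.erase a).card) (by omega) (s.erase a) (t.erase b) rfl herase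
    refine ⟨fun x => if x = a then b else σ₀ x, fun y => if y = b then a else τ₀ y, ?_, ?_⟩
    · intro x hx
      by_cases hxa : x = a
      · subst hxa
        simp only [if_pos rfl]
        exact ⟨hb', hgb, by simp⟩
      · have hx' : x ∈ s.erase a := Finset.mem_erase.mpr ⟨hxa, hx⟩
        obtain ⟨m1, m2, m3⟩ := h1 x hx'
        have hσ0 : σ₀ x ≠ b := (Finset.mem_erase.mp m1).1
        simp only [if_neg hxa, if_neg hσ0]
        exact ⟨Finset.mem_of_mem_erase m1, m2, m3⟩
    · intro y hy
      by_cases hyb : y = b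
      · subst hyb
        exact ⟨by simp [ha], by simp⟩
      · have hy' : y ∈ t.erase b := Finset.mem_erase.mpr ⟨hyb, hy⟩
        obtain ⟨m1, m2⟩ := h2 y hy'
        have hτ0 : τ₀ y ≠ a := (Finset.mem_erase.mp m1).1
        simp only [if_neg hyb, if_neg hτ0]
        exact ⟨Finset.mem_of_mem_erase m1, m2⟩

end MultisetHelpers

section Compress

lemma compress_lt {S : Finset (List ℕ)} {s t : List ℕ} (hs : s ∈ S)
    (hlex : List.Lex (· < ·) s t) : compress S s < compress S t := by
  apply Finset.card_lt_card
  constructor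
  · intro x hx
    rw [Finset.mem_filter] at hx ⊢
    exact ⟨hx.1, List.lex_trans (fun h₁ h₂ => Nat.lt_trans h₁ h₂) hx.2 hlex⟩
  · intro hsub
    have hmem : s ∈ S.filter fun t' => List.Lex (· < ·) t' t :=
      Finset.mem_filter.mpr ⟨hs, hlex⟩
    have := Finset.mem_filter.mp (hsub hmem)
    exact asymm_of (List.Lex (· < ·)) this.2 this.2

lemma compress_injOn {S : Finset (List ℕ)} {s t : List ℕ} (hs : s ∈ S) (ht : t ∈ S)
    (h : compress S s = compress S t) : s = t := by
  by_cases hlt : List.Lex (· < ·) s t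
  · exact absurd h (Nat.ne_of_lt (compress_lt hs hlt))
  by_cases hgt : List.Lex (· < ·) t s
  · exact absurd h.symm (Nat.ne_of_lt (compress_lt ht hgt))
  exact Std.Trichotomous.trichotomous s t hlt hgt

end Compress

section Labels

variable [Fintype V] {G : SimpleGraph V} {r : V}

lemma cdl_eq_labelAt {v : V} {i : ℕ} (h : lvl G r v = i) :
    cdl G r v = labelAt G r i v := by rw [cdl, h]

lemma image_labelAt_eq_image_cdl (G : SimpleGraph V) (r : V) (i : ℕ) :
    (levelSet G r i).image (labelAt G r i) = (levelSet G r i).image (cdl G r) := by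
  apply Finset.image_congr
  intro v hv
  simp only [Finset.coe_filter, levelSet, Set.mem_setOf_eq] at hv
  exact (cdl_eq_labelAt hv.2).symm

lemma cdl_of_leaf {v : V} (hleaf : IsLeaf G v) : cdl G r v = [] := by
  rw [cdl]
  cases h : lvl G r v with
  | zero => rfl
  | succ i => simp [labelAt, hleaf]

lemma cdl_of_nonleaf {v : V} {i : ℕ} (hT : G.IsTree) (hlvl : lvl G r v = i + 1)
    (hleaf : ¬ IsLeaf G v) :
    cdl G r v = Multiset.sort
      (((children G r v).val.map (cdl G r)).map
        (compress ((levelSet G r i).image (cdl G r)))) (· ≤ ·) := by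
  rw [cdl_eq_labelAt hlvl]
  show (if IsLeaf G v then [] else _) = _
  rw [if_neg hleaf, Multiset.map_map, image_labelAt_eq_image_cdl]
  congr 1
  apply Multiset.map_congr rfl
  intro w hw
  have hw' : w ∈ children G r v := hw
  have hlw : lvl G r w = i := by
    have := lvl_of_mem_children hT hw'
    omega
  simp only [Function.comp_apply]
  rw [← cdl_eq_labelAt hlw]

lemma children_mem_levelSet (hT : G.IsTree) {v w : V} {i : ℕ} (hlvl : lvl G r v = i + 1)
    (hw : w ∈ children G r v) : w ∈ levelSet G r i := by
  rw [mem_levelSet]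
  have := lvl_of_mem_children hT hw
  omega

lemma cdl_ne_nil_of_nonleaf {v : V} {i : ℕ} (hT : G.IsTree) (hlvl : lvl G r v = i + 1)
    (hleaf : ¬ IsLeaf G v) : cdl G r v ≠ [] := by
  have hne : (children G r v).Nonempty := by
    by_cases hv : v = r
    · subst hv; exact root_nonleaf_children_nonempty hT hleaf
    · exact nonleaf_children_nonempty hT hv hleaf
  rw [cdl_of_nonleaf hT hlvl hleaf]
  intro h
  have := congrArg List.length h
  rw [Multiset.length_sort] at this
  simp at this
  exact Finset.Nonempty.ne_empty hne this

lemma levelSet_eq_empty_of_gt {i : ℕ} (h : height G r < i) : levelSet G r i = ∅ := by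
  rw [Finset.eq_empty_iff_forall_notMem]
  intro v hv
  rw [mem_levelSet] at hv
  have := lvl_le_height G r v
  omega

lemma levelSet_height (hT : G.IsTree) : levelSet G r (height G r) = {r} := by
  ext v
  rw [mem_levelSet, Finset.mem_singleton, lvl_eq_height_iff hT]

lemma children_root_eq (hT : G.IsTree) (h : 1 ≤ height G r) :
    children G r r = levelSet G r (height G r - 1) := by
  ext v
  rw [mem_children, mem_levelSet]
  constructor
  · rintro ⟨hv, hp⟩
    have h1 := (parent_spec (r := r) hT hv).2
    rw [hp, SimpleGraph.dist_self] at h1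
    have h2 := lvl_add_dist G r v
    omega
  · intro hlvl
    have h2 := lvl_add_dist G r v
    have hd : G.dist r v = 1 := by
      have := dist_le_height G r v
      omega
    have hadj : G.Adj r v := SimpleGraph.dist_eq_one_iff_adj.mp hd
    have hv : v ≠ r := fun hh => by rw [hh, SimpleGraph.dist_self] at hd; omega
    refine ⟨hv, parent_eq hT hadj ?_⟩
    rw [SimpleGraph.dist_self]; omega

end Labels

section TwoTrees

variable {V' : Type*} [Fintype V] [Fintype V']
variable {G : SimpleGraph V} {r : V} {G' : SimpleGraph V'} {r' : V'}

lemma heights_eq (hT : G.IsTree) (hT' : G'.IsTree)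
    (hLL : LevelLabelCondition G r G' r') : height G r = height G' r' := by
  by_contra hne
  rcases Nat.lt_or_ge (height G r) (height G' r') with hlt | hge
  · have h1 := hLL (height G' r') (le_max_right _ _)
    rw [labels, labels, levelSet_eq_empty_of_gt hlt] at h1
    have : cdl G' r' r' ∈ (levelSet G' r' (height G' r')).val.map (cdl G' r') := by
      apply Multiset.mem_map_of_mem
      rw [Finset.mem_def.symm, levelSet_height hT']
      simp
    rw [← h1] at this
    simp at this
  · have hlt : height G' r' < height G r := by omega
    have h1 := hLL (height G r) (le_max_left _ _)
    rw [labels, labels, levelSet_eq_empty_of_gt hlt] at h1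
    have : cdl G r r ∈ (levelSet G r (height G r)).val.map (cdl G r) := by
      apply Multiset.mem_map_of_mem
      rw [Finset.mem_def.symm, levelSet_height hT]
      simp
    rw [h1] at this
    simp at this

lemma labelSets_eq (hT : G.IsTree) (hT' : G'.IsTree)
    (hLL : LevelLabelCondition G r G' r') {i : ℕ} (hi : i ≤ max (height G r) (height G' r')) :
    (levelSet G r i).image (cdl G r) = (levelSet G' r' i).image (cdl G' r') := by
  have h := hLL i hi
  rw [labels, labels] at h
  apply Finset.val_injective
  rw [Finset.image_val, Finset.image_val, h]

/-- The key lemma: vertices at the same level with the same label have children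
with the same multiset of labels. -/
lemma children_labels_eq (hT : G.IsTree) (hT' : G'.IsTree)
    (hLL : LevelLabelCondition G r G' r') {u : V} {u' : V'} {i : ℕ}
    (hu : lvl G r u = i + 1) (hu' : lvl G' r' u' = i + 1)
    (hcdl : cdl G r u = cdl G' r' u') :
    (children G r u).val.map (cdl G r) = (children G' r' u').val.map (cdl G' r') := by
  have hh := heights_eq hT hT' hLL
  have hle : i + 1 ≤ height G r := hu ▸ lvl_le_height G r u
  by_cases htop : i + 1 = height G r
  · -- u = r, u' = r'
    have hur : u = r := (lvl_eq_height_iff hT).mp (by omega)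
    have hur' : u' = r' := (lvl_eq_height_iff hT').mp (by omega)
    rw [hur, hur', children_root_eq hT (by omega), children_root_eq hT' (by omega), ← hh]
    exact hLL (height G r - 1) (le_trans (by omega) (le_max_left _ _))
  · -- u and u' are not roots
    have hur : u ≠ r := fun h => htop (by rw [← hu, h, lvl_root])
    have hur' : u' ≠ r' := fun h => htop (by rw [← hu', h, lvl_root, ← hh])
    by_cases hleaf : IsLeaf G u
    · have hc1 : cdl G r u = [] := cdl_of_leaf hleaf
      have hleaf' : IsLeaf G' u' := by
        by_contra hl'
        exact cdl_ne_nil_of_nonleaf hT' hu' hl' (by rw [← hcdl, hc1])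
      rw [leaf_no_children hT hur hleaf, leaf_no_children hT' hur' hleaf']
      rfl
    · have hleaf' : ¬ IsLeaf G' u' := by
        intro hl'
        exact cdl_ne_nil_of_nonleaf hT hu hleaf (by rw [hcdl, cdl_of_leaf hl'])
      have e1 := cdl_of_nonleaf hT hu hleaf
      have e2 := cdl_of_nonleaf hT' hu' hleaf'
      have hS := labelSets_eq hT hT' hLL (i := i)
        (le_trans (by omega) (le_max_left _ _))
      set S := (levelSet G r i).image (cdl G r) with hSdef
      rw [← hS] at e2
      have hsorteq : (((children G r u).val.map (cdl G r)).map (compress S)) =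
          (((children G' r' u').val.map (cdl G' r')).map (compress S)) := by
        have heq := e1.symm.trans (hcdl.trans e2)
        have h1 : (↑(Multiset.sort
              (((children G r u).val.map (cdl G r)).map (compress S)) (· ≤ ·)) : Multiset ℕ) =
            ↑(Multiset.sort
              (((children G' r' u').val.map (cdl G' r')).map (compress S)) (· ≤ ·)) := by
          rw [heq]
        rwa [Multiset.sort_eq, Multiset.sort_eq] at h1
      apply multiset_map_injOn _ _ _ hsorteq
      intro x hx y hy hxy
      obtain ⟨w, hw, rfl⟩ := Multiset.mem_map.mp hx
      obtain ⟨w', hw', rfl⟩ := Multiset.mem_map.mp hy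
      have hxS : cdl G r w ∈ S := by
        rw [hSdef]
        exact Finset.mem_image_of_mem _ (children_mem_levelSet hT hu hw)
      have hyS : cdl G' r' w' ∈ S := by
        rw [hS]
        exact Finset.mem_image_of_mem _ (children_mem_levelSet hT' hu' hw')
      exact compress_injOn hxS hyS hxy

end TwoTrees

section Construction

variable {V' : Type*} [Fintype V] [Fintype V']
variable {G : SimpleGraph V} {r : V} {G' : SimpleGraph V'} {r' : V'}

lemma cdl_root_eq (hT : G.IsTree) (hT' : G'.IsTree)
    (hLL : LevelLabelCondition G r G' r') : cdl G r r = cdl G' r' r' := by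
  have hh := heights_eq hT hT' hLL
  have h := hLL (height G r) (le_max_left _ _)
  rw [labels, labels, levelSet_height hT, hh, levelSet_height hT'] at h
  simpa using h

lemma step (hT : G.IsTree) (hT' : G'.IsTree) (hLL : LevelLabelCondition G r G' r') (k : ℕ) :
    ∃ (φ : V → V') (ψ : V' → V),
      (∀ v, height G r ≤ lvl G r v + k →
        lvl G' r' (φ v) = lvl G r v ∧
        cdl G' r' (φ v) = cdl G r v ∧
        ψ (φ v) = v ∧
        (v ≠ r → φ (parent G r v) = parent G' r' (φ v))) ∧
      (∀ v', height G r ≤ lvl G' r' v' + k →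
        lvl G r (ψ v') = lvl G' r' v' ∧ φ (ψ v') = v') := by
  haveI : Nonempty V := hT.isConnected.nonempty
  haveI : Nonempty V' := hT'.isConnected.nonempty
  have hh := heights_eq hT hT' hLL
  induction k with
  | zero =>
    refine ⟨fun _ => r', fun _ => r, ?_, ?_⟩
    · intro v hv
      have hvr : v = r := by
        apply (lvl_eq_height_iff hT).mp
        have := lvl_le_height G r v
        omega
      subst hvr
      refine ⟨?_, ?_, rfl, fun hv' => absurd rfl hv'⟩
      · rw [lvl_root, lvl_root, hh]
      · exact (cdl_root_eq hT hT' hLL).symm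
    · intro v' hv'
      have hvr : v' = r' := by
        apply (lvl_eq_height_iff hT').mp
        have := lvl_le_height G' r' v'
        rw [← hh]
        omega
      subst hvr
      rw [lvl_root, lvl_root, hh]
      exact ⟨rfl, rfl⟩
  | succ k ih =>
    obtain ⟨φ, ψ, hA, hB⟩ := ih
    have H : ∀ u : V, height G r ≤ lvl G r u + k → 1 ≤ lvl G r u →
        ∃ (σ : V → V') (τ : V' → V),
          (∀ a ∈ children G r u, σ a ∈ children G' r' (φ u) ∧
            cdl G' r' (σ a) = cdl G r a ∧ τ (σ a) = a) ∧
          (∀ b ∈ children G' r' (φ u), τ b ∈ children G r u ∧ σ (τ b) = b) := by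
      intro u hu1 hu2
      obtain ⟨hl, hc, -, -⟩ := hA u hu1
      have hmaps := children_labels_eq hT hT' hLL (u := u) (u' := φ u) (i := lvl G r u - 1)
        (by omega) (by omega) hc.symm
      obtain ⟨σ, τ, h1, h2⟩ := exists_matching (children G r u) (children G' r' (φ u))
        (cdl G r) (cdl G' r') hmaps
      exact ⟨σ, τ, fun a ha => ⟨(h1 a ha).1, (h1 a ha).2.1, (h1 a ha).2.2⟩, h2⟩
    choose! σ τ h1 h2 using H
    refine ⟨fun v => if height G r ≤ lvl G r v + k then φ v else σ (parent G r v) v,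
      fun v' => if height G r ≤ lvl G' r' v' + k then ψ v'
        else τ (ψ (parent G' r' v')) v', ?_, ?_⟩
    · intro v hv
      by_cases hold : height G r ≤ lvl G r v + k
      · obtain ⟨ha1, ha2, ha3, ha4⟩ := hA v hold
        simp only [if_pos hold]
        have hold' : height G r ≤ lvl G' r' (φ v) + k := by rw [ha1]; exact hold
        refine ⟨ha1, ha2, by rw [if_pos hold']; exact ha3, ?_⟩
        intro hvr
        have hpold : height G r ≤ lvl G r (parent G r v) + k := by
          rw [lvl_parent hT hvr]; omega
        rw [if_pos hpold]
        exact ha4 hvr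
      · have hvr : v ≠ r := by
          intro h
          rw [h, lvl_root] at hold
          omega
        set p := parent G r v with hp
        have hplvl : lvl G r p = lvl G r v + 1 := lvl_parent hT hvr
        have hpold : height G r ≤ lvl G r p + k := by omega
        have hp1 : 1 ≤ lvl G r p := by omega
        obtain ⟨hb1, hb2, hb3, -⟩ := hA p hpold
        have hvchild : v ∈ children G r p := mem_children.mpr ⟨hvr, rfl⟩
        obtain ⟨hm1, hm2, hm3⟩ := h1 p hpold hp1 v hvchild
        simp only [if_neg hold]
        have hσlvl : lvl G' r' (σ p v) = lvl G r v := by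
          have := lvl_of_mem_children hT' hm1
          rw [hb1, hplvl] at this
          omega
        refine ⟨hσlvl, hm2, ?_, ?_⟩
        · rw [if_neg (by rw [hσlvl]; exact hold)]
          have hpar : parent G' r' (σ p v) = φ p := (mem_children.mp hm1).2
          rw [hpar, hb3, hm3]
        · intro _
          have hpar : parent G' r' (σ p v) = φ p := (mem_children.mp hm1).2
          rw [hpar, if_pos hpold]
    · intro v' hv'
      by_cases hold : height G r ≤ lvl G' r' v' + k
      · obtain ⟨hb1, hb2⟩ := hB v' hold
        simp only [if_pos hold]
        have hold2 : height G r ≤ lvl G r (ψ v') + k := by rw [hb1]; exact hold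
        rw [if_pos hold2]
        exact ⟨hb1, hb2⟩
      · have hvr : v' ≠ r' := by
          intro h
          rw [h, lvl_root, ← hh] at hold
          omega
        set p' := parent G' r' v' with hp'
        have hplvl : lvl G' r' p' = lvl G' r' v' + 1 := lvl_parent hT' hvr
        have hpold : height G r ≤ lvl G' r' p' + k := by omega
        obtain ⟨hb1, hb2⟩ := hB p' hpold
        set u := ψ p' with hu
        have hulvl : lvl G r u = lvl G' r' v' + 1 := by rw [hu, hb1, hplvl]
        have huold : height G r ≤ lvl G r u + k := by omega
        have hu1 : 1 ≤ lvl G r u := by omega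
        have hvchild : v' ∈ children G' r' (φ u) := by
          rw [hu, hb2]
          exact mem_children.mpr ⟨hvr, rfl⟩
        obtain ⟨hm1, hm2⟩ := h2 u huold hu1 v' hvchild
        simp only [if_neg hold]
        have hτlvl : lvl G r (τ u v') = lvl G' r' v' := by
          have := lvl_of_mem_children hT hm1
          omega
        refine ⟨hτlvl, ?_⟩
        rw [if_neg (by rw [hτlvl]; exact hold)]
        have hpar : parent G r (τ u v') = u := (mem_children.mp hm1).2
        rw [hpar, hm2]

end Construction

theorem iso_of_levelLabelCondition' {V V' : Type*} [Fintype V] [Fintype V']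
    (G : SimpleGraph V) (r : V) (G' : SimpleGraph V') (r' : V')
    (hT : G.IsTree) (hT' : G'.IsTree) (hLL : LevelLabelCondition G r G' r') :
    ∃ φ : G ≃g G', φ r = r' := by
  have hh := heights_eq hT hT' hLL
  obtain ⟨φ, ψ, hA, hB⟩ := step hT hT' hLL (height G r)
  have hA' : ∀ v, lvl G' r' (φ v) = lvl G r v ∧ cdl G' r' (φ v) = cdl G r v ∧
      ψ (φ v) = v ∧ (v ≠ r → φ (parent G r v) = parent G' r' (φ v)) :=
    fun v => hA v (by omega)
  have hB' : ∀ v', lvl G r (ψ v') = lvl G' r' v' ∧ φ (ψ v') = v' :=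
    fun v' => hB v' (by omega)
  have hleft : Function.LeftInverse ψ φ := fun v => (hA' v).2.2.1
  have hright : Function.RightInverse ψ φ := fun v' => (hB' v').2
  have hinj : Function.Injective φ := hleft.injective
  have hroot : φ r = r' := by
    apply (lvl_eq_height_iff hT').mp
    rw [(hA' r).1, lvl_root, hh]
  have hner : ∀ {v : V}, v ≠ r → φ v ≠ r' := by
    intro v hv h
    exact hv (hinj (h.trans hroot.symm))
  refine ⟨⟨⟨φ, ψ, hleft, hright⟩, ?_⟩, hroot⟩
  intro a b
  show G'.Adj (φ a) (φ b) ↔ G.Adj a b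
  constructor
  · intro h
    rcases (adj_iff (r := r') hT').mp h with ⟨hb, hp⟩ | ⟨ha, hp⟩
    · have hbr : b ≠ r := fun h' => hb (h' ▸ hroot)
      have := (hA' b).2.2.2 hbr
      rw [hp] at this
      have hab : parent G r b = a := hinj this
      exact (adj_iff (r := r) hT).mpr (Or.inl ⟨hbr, hab⟩)
    · have har : a ≠ r := fun h' => ha (h' ▸ hroot)
      have := (hA' a).2.2.2 har
      rw [hp] at this
      have hba : parent G r a = b := hinj this
      exact (adj_iff (r := r) hT).mpr (Or.inr ⟨har, hba⟩)
  · intro h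
    rcases (adj_iff (r := r) hT).mp h with ⟨hb, hp⟩ | ⟨ha, hp⟩
    · have := (hA' b).2.2.2 hb
      rw [hp] at this
      exact (adj_iff (r := r') hT').mpr (Or.inl ⟨hner hb, this.symm⟩)
    · have := (hA' a).2.2.2 ha
      rw [hp] at this
      exact (adj_iff (r := r') hT').mpr (Or.inr ⟨hner ha, this.symm⟩)

/-- If two rooted trees satisfy the level-label condition, then they are isomorphic. -/
theorem iso_of_levelLabelCondition {V V' : Type*} [Fintype V] [Fintype V']
    (G : SimpleGraph V) (r : V) (G' : SimpleGraph V') (r' : V')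
    (hT : G.IsTree) (hT' : G'.IsTree) (hLL : LevelLabelCondition G r G' r') :
    ∃ φ : G ≃g G', φ r = r' := by
  exact iso_of_levelLabelCondition' G r G' r' hT hT' hLL

end AHU
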